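/- arXiv:1212.3649 — 5 statements merged into one kernel-verified Lean document; each statement's English description precedes it below -/
import Mathlib

section
/- Let ρ be a non-degenerate Borel probability measure on ℝ satisfying ∫ exp(a x²/2 + b x) dρ(x) < ∞ for all a,b ∈ ℝ with a > 0. For J > 0 and h ∈ ℝ define f(x) = -(J/2)x² + log ∫ exp(s(Jx+h)) dρ(s). Then f is real analytic on ℝ and f(x) → -∞ as |x| → ∞. -/
set_option maxHeartbeats 1000000


open MeasureTheory Real Filter

lemma analyticAt_rlog {x : ℝ} (hx : 0 < x) : AnalyticAt ℝ Real.log x := by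
  have h1 : AnalyticAt ℝ (fun y : ℝ => (Complex.log ↑y).re) x := by
    have hc : AnalyticAt ℂ Complex.log (↑x) :=
      analyticAt_clog (Complex.ofReal_mem_slitPlane.2 hx)
    exact (Complex.reCLM.analyticAt _).comp
      ((hc.restrictScalars).comp (Complex.ofRealCLM.analyticAt x))
  exact h1.congr (Filter.Eventually.of_forall fun y => Complex.log_ofReal_re y)

theorem stmt_0 (ρ : Measure ℝ) [IsProbabilityMeasure ρ]
    (hnd : ¬ ∃ c : ℝ, ρ = Measure.dirac c)
    (hmom : ∀ a b : ℝ, 0 < a → Integrable (fun x => Real.exp (a * x ^ 2 / 2 + b * x)) ρ)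
    (J h : ℝ) (hJ : 0 < J)
    (f : ℝ → ℝ)
    (hf : ∀ x, f x = -(J / 2) * x ^ 2 + Real.log (∫ s, Real.exp (s * (J * x + h)) ∂ρ)) :
    (∀ x : ℝ, AnalyticAt ℝ f x) ∧ Tendsto f (cocompact ℝ) atBot := by
  -- the complex extension of the mgf
  set G : ℂ → ℂ := fun z => ∫ s, Complex.exp (↑s * z) ∂ρ with hG
  -- integrability of the complex integrand
  have h1 : ∀ z : ℂ, Integrable (fun s : ℝ => Complex.exp (↑s * z)) ρ := by
    intro z
    have hcont : Continuous fun s : ℝ => Complex.exp (↑s * z) :=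
      Complex.continuous_exp.comp (Complex.continuous_ofReal.mul continuous_const)
    refine Integrable.mono' (hmom 1 z.re one_pos) hcont.aestronglyMeasurable ?_
    filter_upwards with s
    rw [Complex.norm_exp]
    have : (↑s * z).re = s * z.re := by simp
    rw [this]
    apply Real.exp_le_exp.2
    nlinarith [sq_nonneg s]
  -- differentiability of G
  have h2 : Differentiable ℂ G := by
    intro z₀
    set R : ℝ := |z₀.re| + 1 with hR
    have hbound : ∀ᵐ (s : ℝ) ∂ρ, ∀ z ∈ Metric.ball z₀ 1,
        ‖(fun (z : ℂ) (s : ℝ) => (↑s : ℂ) * Complex.exp (↑s * z)) z s‖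
          ≤ Real.exp (1 * s ^ 2 / 2 + (R + 1) * s)
            + Real.exp (1 * s ^ 2 / 2 + (-(R + 1)) * s) := by
      filter_upwards with s
      intro z hz
      have hre : |z.re - z₀.re| ≤ 1 := by
        have := Complex.abs_re_le_norm (z - z₀)
        have h2 : ‖z - z₀‖ ≤ 1 := by
          rw [Metric.mem_ball] at hz
          simpa [Complex.dist_eq] using hz.le
        simpa [Complex.sub_re] using this.trans h2
      have hzre : |z.re| ≤ R := by
        have := abs_sub_abs_le_abs_sub z.re z₀.re
        simp only [hR]; linarith
      have hnorm : ‖(↑s : ℂ) * Complex.exp (↑s * z)‖ = |s| * Real.exp (s * z.re) := by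
        rw [norm_mul, Complex.norm_real, Real.norm_eq_abs,
          Complex.norm_exp]
        congr 2
        simp
      rw [hnorm]
      have hb1 : |s| * Real.exp (s * z.re) ≤ Real.exp (|s| + |s| * R) := by
        rw [Real.exp_add]
        apply mul_le_mul
        · linarith [Real.add_one_le_exp |s|]
        · apply Real.exp_le_exp.2
          calc s * z.re ≤ |s * z.re| := le_abs_self _
            _ = |s| * |z.re| := abs_mul _ _
            _ ≤ |s| * R := by
                apply mul_le_mul_of_nonneg_left hzre (abs_nonneg s)
        · positivity
        · positivity
      refine hb1.trans ?_
      rcases le_or_gt 0 s with hs | hs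
      · have : Real.exp (|s| + |s| * R) ≤ Real.exp (1 * s ^ 2 / 2 + (R + 1) * s) := by
          apply Real.exp_le_exp.2
          rw [abs_of_nonneg hs]
          nlinarith [sq_nonneg s]
        have hp : (0:ℝ) < Real.exp (1 * s ^ 2 / 2 + (-(R + 1)) * s) := Real.exp_pos _
        linarith
      · have : Real.exp (|s| + |s| * R) ≤ Real.exp (1 * s ^ 2 / 2 + (-(R + 1)) * s) := by
          apply Real.exp_le_exp.2
          rw [abs_of_neg hs]
          nlinarith [sq_nonneg s]
        have hp : (0:ℝ) < Real.exp (1 * s ^ 2 / 2 + (R + 1) * s) := Real.exp_pos _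
        linarith
    have hdiff : ∀ᵐ (s : ℝ) ∂ρ, ∀ z ∈ Metric.ball z₀ 1,
        HasDerivAt (fun z : ℂ => Complex.exp (↑s * z)) ((↑s : ℂ) * Complex.exp (↑s * z)) z := by
      filter_upwards with s
      intro z _
      have hd : HasDerivAt (fun z : ℂ => (↑s : ℂ) * z) ((↑s : ℂ)) z := by
        simpa using (hasDerivAt_id z).const_mul ((↑s : ℂ))
      simpa [mul_comm] using hd.cexp
    have key : Integrable (fun s : ℝ => (↑s : ℂ) * Complex.exp (↑s * z₀)) ρ ∧
        HasDerivAt (fun z : ℂ => ∫ s, Complex.exp (↑s * z) ∂ρ)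
          (∫ s : ℝ, (↑s : ℂ) * Complex.exp (↑s * z₀) ∂ρ) z₀ := by
      refine hasDerivAt_integral_of_dominated_loc_of_deriv_le
        (F' := fun (z : ℂ) (s : ℝ) => (↑s : ℂ) * Complex.exp (↑s * z)) (Metric.ball_mem_nhds z₀ one_pos) ?_ (h1 z₀) ?_
        hbound ((hmom 1 (R + 1) one_pos).add (hmom 1 (-(R + 1)) one_pos)) hdiff
      · exact Filter.Eventually.of_forall fun z =>
          (Complex.continuous_exp.comp
            (Complex.continuous_ofReal.mul continuous_const)).aestronglyMeasurable
      · exact (Complex.continuous_ofReal.mul (Complex.continuous_exp.comp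
          (Complex.continuous_ofReal.mul continuous_const))).aestronglyMeasurable
    exact key.2.differentiableAt
  have hGa : ∀ z : ℂ, AnalyticAt ℂ G z := fun z => h2.analyticAt z
  -- the real mgf
  set g : ℝ → ℝ := fun t => ∫ s, Real.exp (s * t) ∂ρ with hgdef
  have hg_int : ∀ t : ℝ, Integrable (fun s => Real.exp (s * t)) ρ := by
    intro t
    have hcont : Continuous fun s : ℝ => Real.exp (s * t) :=
      Real.continuous_exp.comp (continuous_id.mul continuous_const)
    refine Integrable.mono' (hmom 1 t one_pos) hcont.aestronglyMeasurable ?_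
    filter_upwards with s
    rw [Real.norm_eq_abs, abs_of_pos (Real.exp_pos _)]
    apply Real.exp_le_exp.2
    nlinarith [sq_nonneg s]
  have hGg : ∀ t : ℝ, G ↑t = ↑(g t) := by
    intro t
    rw [hG, hgdef]
    simp only
    calc (∫ s : ℝ, Complex.exp (↑s * ↑t) ∂ρ)
        = ∫ s : ℝ, ((Real.exp (s * t) : ℝ) : ℂ) ∂ρ := by
          congr 1
          funext s
          rw [← Complex.ofReal_mul, Complex.ofReal_exp]
      _ = ↑(∫ s : ℝ, Real.exp (s * t) ∂ρ) := integral_ofReal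
  have hgpos : ∀ t : ℝ, 0 < g t := fun t => integral_exp_pos (hg_int t)
  -- analyticity of g
  have hga : ∀ t : ℝ, AnalyticAt ℝ g t := by
    intro t
    have h3 : AnalyticAt ℝ (fun t : ℝ => (G ↑t).re) t :=
      (Complex.reCLM.analyticAt _).comp
        (((hGa ↑t).restrictScalars).comp (Complex.ofRealCLM.analyticAt t))
    exact h3.congr (Filter.Eventually.of_forall fun t => by
      show (G ↑t).re = g t
      rw [hGg t, Complex.ofReal_re])
  -- analyticity of f
  have hfa : ∀ x : ℝ, AnalyticAt ℝ f x := by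
    intro x
    have h4 : AnalyticAt ℝ (fun x : ℝ => -(J / 2) * x ^ 2 + Real.log (g (J * x + h))) x := by
      apply AnalyticAt.add
      · exact (analyticAt_const).mul (analyticAt_id.pow 2)
      · have haff : AnalyticAt ℝ (fun x : ℝ => J * x + h) x :=
          ((analyticAt_const).mul analyticAt_id).add analyticAt_const
        have hcomp : AnalyticAt ℝ ((Real.log ∘ g) ∘ (fun x : ℝ => J * x + h)) x :=
          AnalyticAt.comp (f := fun x : ℝ => J * x + h)
            ((analyticAt_rlog (hgpos (J * x + h))).comp (hga (J * x + h))) haff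
        exact hcomp
    exact h4.congr (Filter.Eventually.of_forall fun x => (hf x).symm)
  refine ⟨hfa, ?_⟩
  -- the tendsto part
  set C : ℝ := ∫ s, Real.exp (4 * J * s ^ 2 / 2 + 0 * s) ∂ρ with hC
  have hCint : Integrable (fun s => Real.exp (4 * J * s ^ 2 / 2 + 0 * s)) ρ :=
    hmom (4 * J) 0 (by linarith)
  have hCpos : 0 < C := integral_exp_pos hCint
  -- pointwise bound on g
  have hgle : ∀ t : ℝ, g t ≤ Real.exp (t ^ 2 / (8 * J)) * C := by
    intro t
    have hmono : ∀ s : ℝ, Real.exp (s * t)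
        ≤ Real.exp (t ^ 2 / (8 * J)) * Real.exp (4 * J * s ^ 2 / 2 + 0 * s) := by
      intro s
      rw [← Real.exp_add]
      apply Real.exp_le_exp.2
      have h8J : (0:ℝ) < 8 * J := by linarith
      rw [div_add' _ _ _ (ne_of_gt h8J), le_div_iff₀ h8J]
      nlinarith [sq_nonneg (4 * J * s - t)]
    calc g t ≤ ∫ s, Real.exp (t ^ 2 / (8 * J)) * Real.exp (4 * J * s ^ 2 / 2 + 0 * s) ∂ρ := by
          exact integral_mono (hg_int t) (hCint.const_mul _) hmono
      _ = Real.exp (t ^ 2 / (8 * J)) * C := by rw [integral_const_mul]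
  -- bound on f
  have hfb : ∀ x : ℝ, f x ≤ -(J / 4) * x ^ 2 + (h ^ 2 / (4 * J) + Real.log C) := by
    intro x
    rw [hf x]
    have hlog : Real.log (∫ s, Real.exp (s * (J * x + h)) ∂ρ)
        ≤ (J * x + h) ^ 2 / (8 * J) + Real.log C := by
      have := Real.log_le_log (hgpos (J * x + h)) (hgle (J * x + h))
      rwa [Real.log_mul (ne_of_gt (Real.exp_pos _)) (ne_of_gt hCpos), Real.log_exp] at this
    have h6 : (J * x + h) ^ 2 ≤ 2 * J ^ 2 * x ^ 2 + 2 * h ^ 2 := by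
      nlinarith [sq_nonneg (J * x - h)]
    have h7 : (J * x + h) ^ 2 / (8 * J) ≤ (2 * J ^ 2 * x ^ 2 + 2 * h ^ 2) / (8 * J) := by
      gcongr
    have h8 : (2 * J ^ 2 * x ^ 2 + 2 * h ^ 2) / (8 * J) = J / 4 * x ^ 2 + h ^ 2 / (4 * J) := by
      field_simp
      try ring
    have hsq : (J * x + h) ^ 2 / (8 * J) ≤ J / 4 * x ^ 2 + h ^ 2 / (4 * J) := by
      rw [← h8]; exact h7
    linarith [hlog, hsq]
  -- the comparison function tends to atBot
  have hsq_tendsto : Tendsto (fun x : ℝ => x ^ 2) (cocompact ℝ) atTop := by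
    have h5 : Tendsto (fun x : ℝ => ‖x‖ ^ 2) (cocompact ℝ) atTop :=
      (tendsto_pow_atTop two_ne_zero).comp tendsto_norm_cocompact_atTop
    refine h5.congr fun x => ?_
    rw [Real.norm_eq_abs, sq_abs]
  have hφ : Tendsto (fun x : ℝ => -(J / 4) * x ^ 2 + (h ^ 2 / (4 * J) + Real.log C))
      (cocompact ℝ) atBot := by
    apply tendsto_atBot_add_const_right
    exact (tendsto_const_mul_atBot_of_neg (by linarith)).2 hsq_tendsto
  exact tendsto_atBot_mono' _ (Filter.Eventually.of_forall hfb) hφ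
end

section
/- Let ρ be a non-degenerate Borel probability measure on ℝ satisfying ∫ exp(a x²/2 + b x) dρ(x) < ∞ for all a > 0, b ∈ ℝ, and let f(x) = -(J/2)x² + log ∫ exp(s(Jx+h)) dρ(s) with J > 0. Then f attains its supremum and has only finitely many global maximum points. -/
open MeasureTheory Real Filter

theorem stmt_1 (ρ : Measure ℝ) [IsProbabilityMeasure ρ]
    (hnd : ¬ ∃ c : ℝ, ρ = Measure.dirac c)
    (hmom : ∀ a b : ℝ, 0 < a → Integrable (fun x => Real.exp (a * x ^ 2 / 2 + b * x)) ρ)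
    (J h : ℝ) (hJ : 0 < J)
    (f : ℝ → ℝ)
    (hf : ∀ x, f x = -(J / 2) * x ^ 2 + Real.log (∫ s, Real.exp (s * (J * x + h)) ∂ρ)) :
    (∃ μ : ℝ, ∀ x : ℝ, f x ≤ f μ) ∧ {μ : ℝ | ∀ x : ℝ, f x ≤ f μ}.Finite := by
  classical
  -- positivity of integrals of positive functions
  have hpos_int : ∀ g : ℝ → ℝ, (∀ s, 0 < g s) → Integrable g ρ → 0 < ∫ s, g s ∂ρ := by
    intro g hg hgi
    rw [integral_pos_iff_support_of_nonneg_ae (Filter.Eventually.of_forall fun s => (hg s).le) hgi]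
    have hsupp : Function.support g = Set.univ := Set.eq_univ_of_forall fun s => (hg s).ne'
    rw [hsupp, measure_univ]
    simp
  -- integrability of exponentials
  have hexp : ∀ b : ℝ, Integrable (fun s => Real.exp (s * b)) ρ := by
    intro b
    refine (hmom 1 b one_pos).mono'
      ((Real.continuous_exp.comp (continuous_id.mul continuous_const)).aestronglyMeasurable) ?_
    filter_upwards with s
    rw [Real.norm_eq_abs, abs_of_pos (Real.exp_pos _)]
    apply Real.exp_le_exp.2
    nlinarith [sq_nonneg s]
  have habs : ∀ c : ℝ, Integrable (fun s => Real.exp (c * |s|)) ρ := by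
    intro c
    refine ((hexp |c|).add (hexp (-|c|))).mono'
      ((Real.continuous_exp.comp (continuous_const.mul continuous_abs)).aestronglyMeasurable) ?_
    filter_upwards with s
    rw [Real.norm_eq_abs, abs_of_pos (Real.exp_pos _)]
    simp only [Pi.add_apply]
    have e1 := (Real.exp_pos (s * |c|)).le
    have e2 := (Real.exp_pos (s * -|c|)).le
    have key : Real.exp (c * |s|) ≤ Real.exp (s * |c|) ∨
        Real.exp (c * |s|) ≤ Real.exp (s * -|c|) := by
      rcases abs_cases s with ⟨hs1, hs2⟩ | ⟨hs1, hs2⟩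
      · left
        apply Real.exp_le_exp.2
        rw [hs1]
        nlinarith [mul_nonneg (sub_nonneg.2 (le_abs_self c)) hs2]
      · right
        apply Real.exp_le_exp.2
        rw [hs1]
        nlinarith [mul_nonneg (sub_nonneg.2 (le_abs_self c)) (by linarith : (0:ℝ) ≤ -s)]
    rcases key with k | k <;> linarith
  have hpoly : ∀ c : ℝ, Integrable (fun s => |s| * Real.exp (c * |s|)) ρ := by
    intro c
    refine (habs (c + 1)).mono'
      ((continuous_abs.mul
        (Real.continuous_exp.comp (continuous_const.mul continuous_abs))).aestronglyMeasurable) ?_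
    filter_upwards with s
    rw [Real.norm_eq_abs, abs_of_nonneg (by positivity)]
    have h1 : |s| ≤ Real.exp |s| := by
      have := Real.add_one_le_exp |s|
      linarith
    calc |s| * Real.exp (c * |s|) ≤ Real.exp |s| * Real.exp (c * |s|) :=
          mul_le_mul_of_nonneg_right h1 (Real.exp_pos _).le
      _ = Real.exp ((c + 1) * |s|) := by rw [← Real.exp_add]; ring_nf
  -- the complex moment generating function
  set F : ℂ → ℂ := fun z => ∫ s, Complex.exp (s * z) ∂ρ with hF
  have hFint : ∀ z : ℂ, Integrable (fun s : ℝ => Complex.exp (s * z)) ρ := by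
    intro z
    refine (habs ‖z‖).mono'
      ((Complex.continuous_exp.comp
        (Complex.continuous_ofReal.mul continuous_const)).aestronglyMeasurable) ?_
    filter_upwards with s
    rw [Complex.norm_exp]
    apply Real.exp_le_exp.2
    have : (↑s * z).re = s * z.re := by simp [Complex.mul_re]
    rw [this]
    calc s * z.re ≤ |s * z.re| := le_abs_self _
      _ = |s| * |z.re| := abs_mul _ _
      _ ≤ |s| * ‖z‖ := by
          apply mul_le_mul_of_nonneg_left _ (abs_nonneg s)
          exact Complex.abs_re_le_norm z
      _ = ‖z‖ * |s| := mul_comm _ _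
  have hFderiv : ∀ z : ℂ, HasDerivAt F (∫ s, Complex.exp (s * z) * s ∂ρ) z := by
    intro z₀
    have key := hasDerivAt_integral_of_dominated_loc_of_deriv_le
      (F := fun z (s : ℝ) => Complex.exp (s * z))
      (F' := fun z (s : ℝ) => Complex.exp (s * z) * s)
      (x₀ := z₀) (bound := fun s => |s| * Real.exp ((‖z₀‖ + 1) * |s|))
      (μ := ρ) (s := Metric.ball z₀ 1) (Metric.ball_mem_nhds z₀ one_pos)
      (Filter.Eventually.of_forall fun z =>
        (Complex.continuous_exp.comp
          (Complex.continuous_ofReal.mul continuous_const)).aestronglyMeasurable)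
      (hFint z₀)
      (((Complex.continuous_exp.comp
          (Complex.continuous_ofReal.mul continuous_const)).mul
          Complex.continuous_ofReal).aestronglyMeasurable)
      ?_ (hpoly _) ?_
    · exact key.2
    · filter_upwards with s
      intro z hz
      rw [norm_mul, Complex.norm_exp, Complex.norm_real,
        Real.norm_eq_abs]
      rw [mul_comm (|s|) (Real.exp _)]
      apply mul_le_mul_of_nonneg_right _ (abs_nonneg s)
      apply Real.exp_le_exp.2
      have h1 : (↑s * z).re = s * z.re := by simp [Complex.mul_re]
      rw [h1]
      have h2 : ‖z‖ ≤ ‖z₀‖ + 1 := by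
        have := mem_ball_iff_norm.1 hz
        calc ‖z‖ = ‖z₀ + (z - z₀)‖ := by ring_nf
          _ ≤ ‖z₀‖ + ‖z - z₀‖ := norm_add_le _ _
          _ ≤ ‖z₀‖ + 1 := by linarith
      calc s * z.re ≤ |s| * |z.re| := by
            calc s * z.re ≤ |s * z.re| := le_abs_self _
              _ = |s| * |z.re| := abs_mul _ _
        _ ≤ |s| * ‖z‖ := mul_le_mul_of_nonneg_left (Complex.abs_re_le_norm z) (abs_nonneg s)
        _ ≤ |s| * (‖z₀‖ + 1) := mul_le_mul_of_nonneg_left h2 (abs_nonneg s)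
        _ = (‖z₀‖ + 1) * |s| := mul_comm _ _
    · filter_upwards with s
      intro z hz
      have h1 : HasDerivAt (fun z : ℂ => (s : ℂ) * z) ((s : ℂ) * 1) z :=
        (hasDerivAt_id z).const_mul _
      simpa using h1.cexp
  have hFan : ∀ z : ℂ, AnalyticAt ℂ F z := by
    intro z
    have hd : DifferentiableOn ℂ F Set.univ :=
      fun w _ => ((hFderiv w).differentiableAt).differentiableWithinAt
    exact hd.analyticOnNhd isOpen_univ z trivial
  -- the real MGF
  set L : ℝ → ℝ := fun t => ∫ s, Real.exp (s * t) ∂ρ with hL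
  have hLF : ∀ t : ℝ, F (t : ℂ) = ((L t : ℝ) : ℂ) := by
    intro t
    show (∫ s, Complex.exp (s * t) ∂ρ) = (((∫ s, Real.exp (s * t) ∂ρ : ℝ)) : ℂ)
    rw [← Complex.coe_algebraMap, RCLike.algebraMap_eq_ofReal, ← integral_ofReal]
    congr 1
    funext s
    norm_cast
    exact (Complex.ofReal_exp (s * t)).symm
  have hLa : ∀ t : ℝ, AnalyticAt ℝ L t := by
    intro t
    have h1 : AnalyticAt ℝ (fun t : ℝ => (F (t : ℂ)).re) t := by
      have h2 : AnalyticAt ℝ F ((Complex.ofRealCLM : ℝ →L[ℝ] ℂ) t) := (hFan _).restrictScalars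
      exact (Complex.reCLM.analyticAt _).comp (h2.comp (Complex.ofRealCLM.analyticAt t))
    refine h1.congr ?_
    filter_upwards with x
    rw [hLF]
    simp
  have hLpos : ∀ t : ℝ, 0 < L t := fun t =>
    hpos_int _ (fun s => Real.exp_pos _) (hexp t)
  -- log is real analytic at positive points
  have hlog : ∀ y : ℝ, 0 < y → AnalyticAt ℝ Real.log y := by
    intro y hy
    have h1 : AnalyticAt ℝ (fun x : ℝ => (Complex.log (x : ℂ)).re) y := by
      have h2 : AnalyticAt ℝ Complex.log ((Complex.ofRealCLM : ℝ →L[ℝ] ℂ) y) :=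
        (analyticAt_clog (by simpa using Complex.ofReal_mem_slitPlane.2 hy)).restrictScalars
      exact (Complex.reCLM.analyticAt _).comp (h2.comp (Complex.ofRealCLM.analyticAt y))
    refine h1.congr ?_
    filter_upwards with x
    exact Complex.log_ofReal_re x
  -- f is real analytic
  have hfe : f = fun x => -(J / 2) * x ^ 2 + Real.log (L (J * x + h)) := by
    funext x
    rw [hf]
  have hfa : ∀ x : ℝ, AnalyticAt ℝ f x := by
    intro x
    rw [hfe]
    apply AnalyticAt.add
    · exact analyticAt_const.mul (analyticAt_id.pow 2)
    · have haff : AnalyticAt ℝ (fun x : ℝ => J * x + h) x :=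
        (analyticAt_const.mul analyticAt_id).add analyticAt_const
      have h1 : AnalyticAt ℝ (fun x : ℝ => L (J * x + h)) x :=
        AnalyticAt.comp (g := L) (f := fun x : ℝ => J * x + h) (hLa _) haff
      exact AnalyticAt.comp (g := Real.log) (f := fun x : ℝ => L (J * x + h))
        (hlog _ (hLpos _)) h1
  -- upper bound
  have hCi : Integrable (fun s => Real.exp (2 * J * s ^ 2)) ρ := by
    refine (hmom (4 * J) 0 (by positivity)).congr ?_
    filter_upwards with s
    congr 1
    ring
  set C : ℝ := ∫ s, Real.exp (2 * J * s ^ 2) ∂ρ with hC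
  have hCpos : 0 < C := hpos_int _ (fun s => Real.exp_pos _) hCi
  have hLle : ∀ t : ℝ, L t ≤ Real.exp (t ^ 2 / (8 * J)) * C := by
    intro t
    have hpt : ∀ s : ℝ, Real.exp (s * t) ≤ Real.exp (t ^ 2 / (8 * J)) * Real.exp (2 * J * s ^ 2) := by
      intro s
      rw [← Real.exp_add]
      apply Real.exp_le_exp.2
      have h8 : (0:ℝ) < 8 * J := by positivity
      have key : (s * t - 2 * J * s ^ 2) * (8 * J) ≤ t ^ 2 := by
        nlinarith [sq_nonneg (t - 4 * J * s)]
      have key2 := (le_div_iff₀ h8).2 key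
      linarith
    calc L t ≤ ∫ s, Real.exp (t ^ 2 / (8 * J)) * Real.exp (2 * J * s ^ 2) ∂ρ :=
          integral_mono (hexp t) (hCi.const_mul _) hpt
      _ = Real.exp (t ^ 2 / (8 * J)) * C := integral_const_mul _ _
  set D : ℝ := h ^ 2 / (4 * J) + Real.log C with hD
  have hub : ∀ x : ℝ, f x ≤ -(J / 4) * x ^ 2 + D := by
    intro x
    rw [hf]
    have h1 : Real.log (∫ s, Real.exp (s * (J * x + h)) ∂ρ)
        ≤ (J * x + h) ^ 2 / (8 * J) + Real.log C := by
      have h2 : L (J * x + h) ≤ Real.exp ((J * x + h) ^ 2 / (8 * J)) * C := hLle _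
      have h3 := Real.log_le_log (hLpos (J * x + h)) h2
      rwa [Real.log_mul (Real.exp_ne_zero _) hCpos.ne', Real.log_exp] at h3
    have h4 : (J * x + h) ^ 2 / (8 * J) ≤ J / 4 * x ^ 2 + h ^ 2 / (4 * J) := by
      rw [div_le_iff₀ (by positivity : (0:ℝ) < 8 * J)]
      have hD' : h ^ 2 / (4 * J) * (8 * J) = 2 * h ^ 2 := by field_simp; ring
      nlinarith [sq_nonneg (J * x - h), hD']
    have h5 : Real.log (∫ s, Real.exp (s * (J * x + h)) ∂ρ)
        ≤ J / 4 * x ^ 2 + D := by rw [hD]; linarith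
    linarith
  -- continuity and existence of a maximizer
  have hcont : Continuous f := continuous_iff_continuousAt.2 fun x => (hfa x).continuousAt
  have hsq : Tendsto (fun x : ℝ => x ^ 2) (cocompact ℝ) atTop := by
    have h1 : Tendsto (fun y : ℝ => y ^ 2) atTop atTop := tendsto_pow_atTop two_ne_zero
    have h2 := h1.comp (tendsto_norm_cocompact_atTop (E := ℝ))
    refine h2.congr fun x => ?_
    simp [Real.norm_eq_abs, sq_abs]
  have hkey : ∀ u v : ℝ, (D - v) / (J / 4) ≤ u → -(J / 4) * u + D ≤ v := by
    intro u v huv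
    have hJ4 : (0:ℝ) < J / 4 := by positivity
    have h1 := mul_le_mul_of_nonneg_left huv hJ4.le
    rw [mul_div_cancel₀ _ hJ4.ne'] at h1
    linarith
  have hev : ∀ᶠ x in cocompact ℝ, f x ≤ f 0 := by
    filter_upwards [hsq.eventually_ge_atTop ((D - f 0) / (J / 4))] with x hx
    exact le_trans (hub x) (hkey _ _ hx)
  have hmax : ∃ μ : ℝ, ∀ x : ℝ, f x ≤ f μ := hcont.exists_forall_ge' 0 hev
  refine ⟨hmax, ?_⟩
  obtain ⟨μ₀, hμ₀⟩ := hmax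
  set M : ℝ := f μ₀ with hM
  have hSeq : {μ : ℝ | ∀ x : ℝ, f x ≤ f μ} = {μ : ℝ | f μ = M} := by
    ext μ
    constructor
    · intro hμ
      exact le_antisymm (hμ₀ μ) (hμ μ₀)
    · intro hμ x
      calc f x ≤ M := hμ₀ x
        _ = f μ := hμ.symm
  rw [hSeq]
  -- the max set is bounded
  set B : ℝ := (D - M) / (J / 4) with hB
  set R : ℝ := Real.sqrt (max 0 B) with hR
  have hJ4 : (0:ℝ) < J / 4 := by positivity
  have hsub : {μ : ℝ | f μ = M} ⊆ Set.Icc (-R) R := by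
    intro μ hμ
    have h1 : M ≤ -(J / 4) * μ ^ 2 + D := hμ ▸ hub μ
    have h2 : μ ^ 2 ≤ max 0 B := by
      refine le_max_of_le_right ?_
      rw [hB, le_div_iff₀ hJ4]
      nlinarith
    have h3 : |μ| ≤ R := by
      rw [hR, ← Real.sqrt_sq_eq_abs]
      exact Real.sqrt_le_sqrt h2
    exact abs_le.1 h3
  -- finiteness by the identity theorem for analytic functions
  by_contra hinf
  have hSinf : {μ : ℝ | f μ = M}.Infinite := hinf
  obtain ⟨z, hzK, hz⟩ := hSinf.exists_accPt_of_subset_isCompact isCompact_Icc hsub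
  rw [accPt_iff_frequently] at hz
  have hfreq : ∃ᶠ y in nhdsWithin z {z}ᶜ, f y = M := by
    rw [frequently_nhdsWithin_iff]
    exact hz.mono fun y hy => ⟨hy.2, hy.1⟩
  have heq : ∀ᶠ y in nhds z, f y = M :=
    ((hfa z).frequently_eq_iff_eventually_eq analyticAt_const).1 hfreq
  have hall : ∀ y : ℝ, f y = M := by
    intro y
    have h1 : Set.EqOn f (fun _ => M) Set.univ :=
      AnalyticOnNhd.eqOn_of_preconnected_of_eventuallyEq
        (fun w _ => hfa w) (fun w _ => analyticAt_const) isPreconnected_univ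
        (Set.mem_univ z) heq
    exact h1 (Set.mem_univ y)
  -- contradiction: f is not constant since it tends to -∞
  have hRR : (R + 1) ^ 2 > max 0 B := by
    have h1 : R ^ 2 = max 0 B := Real.sq_sqrt (le_max_left 0 B)
    have h2 : 0 ≤ R := Real.sqrt_nonneg _
    nlinarith
  have hlt : f (R + 1) < M := by
    have h1 : B < (R + 1) ^ 2 := lt_of_le_of_lt (le_max_right 0 B) hRR
    have h2 : D - M < J / 4 * (R + 1) ^ 2 := by
      rw [hB, div_lt_iff₀ hJ4] at h1
      linarith
    have h3 := hub (R + 1)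
    linarith
  rw [hall (R + 1)] at hlt
  exact lt_irrefl _ hlt
end

section
/- Let f : ℝ → ℝ be continuous with ∫ exp(f(x)) dx < ∞ and sup f = F = f(μ) attained at some point μ. Then for every natural number N ≥ 1, ∫ exp(N f(x)) dx < ∞, and (1/N) log ∫ exp(N f(x)) dx → f(μ) as N → ∞. -/
open MeasureTheory Real Filter

theorem stmt_2 (f : ℝ → ℝ) (hc : Continuous f)
    (hint : Integrable (fun x => Real.exp (f x)) volume)
    (μ : ℝ) (hmax : ∀ x : ℝ, f x ≤ f μ) :
    (∀ N : ℕ, 1 ≤ N → Integrable (fun x => Real.exp (N * f x)) volume) ∧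
    Tendsto (fun N : ℕ => (1 / (N : ℝ)) * Real.log (∫ x, Real.exp (N * f x)))
      atTop (nhds (f μ)) := by
  set F := f μ with hF
  have key : ∀ N : ℕ, 1 ≤ N → ∀ x : ℝ,
      Real.exp ((N : ℝ) * f x) ≤ Real.exp (((N : ℝ) - 1) * F) * Real.exp (f x) := by
    intro N hN x
    have h1 : (1:ℝ) ≤ (N:ℝ) := by exact_mod_cast hN
    have : (N:ℝ) * f x = ((N:ℝ) - 1) * f x + f x := by ring
    rw [this, Real.exp_add]
    have : ((N:ℝ) - 1) * f x ≤ ((N:ℝ) - 1) * F :=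
      mul_le_mul_of_nonneg_left (hmax x) (by linarith)
    exact mul_le_mul_of_nonneg_right (Real.exp_le_exp.2 this) (Real.exp_pos _).le
  have hI : ∀ N : ℕ, 1 ≤ N → Integrable (fun x => Real.exp (N * f x)) volume := by
    intro N hN
    refine (hint.const_mul (Real.exp (((N:ℝ) - 1) * F))).mono'
      ((Real.continuous_exp.comp ((continuous_const (y := (N:ℝ))).mul hc)).aestronglyMeasurable) ?_
    filter_upwards with x
    rw [Real.norm_eq_abs, abs_of_pos (Real.exp_pos _)]
    exact key N hN x
  refine ⟨hI, ?_⟩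
  have hpos : ∀ N : ℕ, 1 ≤ N → 0 < ∫ x, Real.exp (N * f x) := by
    intro N hN
    rw [integral_pos_iff_support_of_nonneg (fun x => (Real.exp_pos _).le) (hI N hN)]
    have : Function.support (fun x : ℝ => Real.exp ((N:ℝ) * f x)) = Set.univ :=
      Set.eq_univ_of_forall fun x => (Real.exp_pos _).ne'
    rw [this]
    simp
  have hpos1 : 0 < ∫ x, Real.exp (f x) := by
    rw [integral_pos_iff_support_of_nonneg (fun x => (Real.exp_pos _).le) hint]
    have : Function.support (fun x : ℝ => Real.exp (f x)) = Set.univ :=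
      Set.eq_univ_of_forall fun x => (Real.exp_pos _).ne'
    rw [this]
    simp
  -- upper bound
  have hub : ∀ N : ℕ, 1 ≤ N →
      (1 / (N : ℝ)) * Real.log (∫ x, Real.exp (N * f x))
        ≤ F + (Real.log (∫ x, Real.exp (f x)) - F) * (1 / (N:ℝ)) := by
    intro N hN
    have hN0 : (0:ℝ) < N := by exact_mod_cast hN
    have hle : (∫ x, Real.exp (N * f x))
        ≤ Real.exp (((N:ℝ) - 1) * F) * ∫ x, Real.exp (f x) := by
      rw [← integral_const_mul]
      exact integral_mono (hI N hN) (hint.const_mul _) (key N hN)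
    have hlog : Real.log (∫ x, Real.exp (N * f x))
        ≤ ((N:ℝ) - 1) * F + Real.log (∫ x, Real.exp (f x)) := by
      calc Real.log (∫ x, Real.exp (N * f x))
          ≤ Real.log (Real.exp (((N:ℝ) - 1) * F) * ∫ x, Real.exp (f x)) :=
            Real.log_le_log (hpos N hN) hle
        _ = ((N:ℝ) - 1) * F + Real.log (∫ x, Real.exp (f x)) := by
            rw [Real.log_mul (Real.exp_pos _).ne' hpos1.ne',
              Real.log_exp]
    have := mul_le_mul_of_nonneg_left hlog (by positivity : (0:ℝ) ≤ 1 / (N:ℝ))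
    calc (1 / (N : ℝ)) * Real.log (∫ x, Real.exp (N * f x))
        ≤ (1 / (N:ℝ)) * (((N:ℝ) - 1) * F + Real.log (∫ x, Real.exp (f x))) := this
      _ = F + (Real.log (∫ x, Real.exp (f x)) - F) * (1 / (N:ℝ)) := by
          field_simp; ring
  refine tendsto_order.2 ⟨?_, ?_⟩
  · -- lower bound
    intro a ha
    set ε := (F - a) / 2 with hε
    have hεpos : 0 < ε := by simp [hε]; linarith
    have hev : ∀ᶠ x in nhds μ, F - ε < f x :=
      (hc.continuousAt (x := μ)).eventually (eventually_gt_nhds (by linarith))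
    rw [Metric.eventually_nhds_iff] at hev
    obtain ⟨δ, hδ, hball⟩ := hev
    set s := Set.Icc (μ - δ/2) (μ + δ/2) with hs
    have hvol : volume s = ENNReal.ofReal δ := by
      rw [hs, Real.volume_Icc]; ring_nf
    have hmem : ∀ x ∈ s, F - ε ≤ f x := by
      intro x hx
      refine (hball ?_).le
      rw [Real.dist_eq]
      rw [hs, Set.mem_Icc] at hx
      rw [abs_sub_lt_iff]
      constructor <;> linarith
    have hlow : ∀ N : ℕ, 1 ≤ N →
        δ * Real.exp ((N:ℝ) * (F - ε)) ≤ ∫ x, Real.exp (N * f x) := by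
      intro N hN
      have c1 : δ * Real.exp ((N:ℝ) * (F - ε)) = ∫ _ in s, Real.exp ((N:ℝ) * (F - ε)) := by
        rw [setIntegral_const, measureReal_def, hvol, smul_eq_mul, ENNReal.toReal_ofReal hδ.le]
      rw [c1]
      calc (∫ _ in s, Real.exp ((N:ℝ) * (F - ε)))
          ≤ ∫ x in s, Real.exp ((N:ℝ) * f x) := by
            refine setIntegral_mono_on (integrableOn_const ?_) ((hI N hN).integrableOn)
              measurableSet_Icc ?_
            · rw [hvol]; exact ENNReal.ofReal_ne_top
            · intro x hx
              exact Real.exp_le_exp.2 (mul_le_mul_of_nonneg_left (hmem x hx) (N.cast_nonneg))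
        _ ≤ ∫ x, Real.exp ((N:ℝ) * f x) :=
            setIntegral_le_integral (hI N hN) (ae_of_all _ fun x => (Real.exp_pos _).le)
    have htend : Tendsto (fun N : ℕ => Real.log δ * (1 / (N:ℝ)) + (F - ε))
        atTop (nhds (F - ε)) := by
      have := (tendsto_one_div_atTop_nhds_zero_nat.const_mul (Real.log δ)).add_const (F - ε)
      simpa using this
    have hFεa : a < F - ε := by rw [hε]; linarith
    filter_upwards [htend.eventually (eventually_gt_nhds hFεa), eventually_ge_atTop 1]
      with N h1 h2
    have hN0 : (0:ℝ) < N := by exact_mod_cast h2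
    have hloglow : Real.log δ + (N:ℝ) * (F - ε) ≤ Real.log (∫ x, Real.exp (N * f x)) := by
      calc Real.log δ + (N:ℝ) * (F - ε)
          = Real.log (δ * Real.exp ((N:ℝ) * (F - ε))) := by
            rw [Real.log_mul hδ.ne' (Real.exp_pos _).ne', Real.log_exp]
        _ ≤ Real.log (∫ x, Real.exp (N * f x)) :=
            Real.log_le_log (by positivity) (hlow N h2)
    have : Real.log δ * (1 / (N:ℝ)) + (F - ε)
        ≤ (1 / (N : ℝ)) * Real.log (∫ x, Real.exp (N * f x)) := by
      have := mul_le_mul_of_nonneg_left hloglow (by positivity : (0:ℝ) ≤ 1 / (N:ℝ))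
      calc Real.log δ * (1 / (N:ℝ)) + (F - ε)
          = (1 / (N:ℝ)) * (Real.log δ + (N:ℝ) * (F - ε)) := by field_simp
        _ ≤ _ := this
    linarith
  · -- upper bound
    intro b hb
    have htend : Tendsto (fun N : ℕ => F + (Real.log (∫ x, Real.exp (f x)) - F) * (1 / (N:ℝ)))
        atTop (nhds F) := by
      have := (tendsto_one_div_atTop_nhds_zero_nat.const_mul
        (Real.log (∫ x, Real.exp (f x)) - F)).const_add F
      simpa using this
    filter_upwards [htend.eventually (eventually_lt_nhds hb), eventually_ge_atTop 1]
      with N h1 h2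
    exact lt_of_le_of_lt (hub N h2) h1
end

section
/- For the Curie-Weiss model with f(x) = -(J/2)x² + log cosh(Jx + h): (i) if h ≠ 0 and J > 0, then f has a unique global maximum point; (ii) if h = 0 and 0 < J ≤ 1, the unique global maximum point of f is x = 0; (iii) if h = 0 and J > 1, then f has exactly two global maximum points ±μ₀ with μ₀ > 0 satisfying μ₀ = tanh(J μ₀). -/
open Real Set

noncomputable def fCW (J h x : ℝ) : ℝ := -(J / 2) * x ^ 2 + Real.log (Real.cosh (J * x + h))
noncomputable def PhiCW (J y : ℝ) : ℝ := y - J * Real.tanh y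
noncomputable def FCW (J y : ℝ) : ℝ := -(J / 2) * Real.tanh y ^ 2 + Real.log (Real.cosh y)
noncomputable def sCW (J : ℝ) : ℝ := Real.arsinh (Real.sqrt (J - 1))

lemma tanh_sq_lt_one (y : ℝ) : Real.tanh y ^ 2 < 1 := by
  have hc := Real.cosh_pos y
  rw [Real.tanh_eq_sinh_div_cosh, div_pow, div_lt_one (by positivity)]
  nlinarith [Real.cosh_sq y]

lemma one_sub_tanh_sq (y : ℝ) : 1 - Real.tanh y ^ 2 = 1 / Real.cosh y ^ 2 := by
  have hc := Real.cosh_pos y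
  rw [Real.tanh_eq_sinh_div_cosh, div_pow]
  field_simp
  linarith [Real.cosh_sq y]

lemma hasDerivAt_tanh' (y : ℝ) : HasDerivAt Real.tanh (1 - Real.tanh y ^ 2) y := by
  have hc := Real.cosh_pos y
  have h := (Real.hasDerivAt_sinh y).div (Real.hasDerivAt_cosh y) hc.ne'
  have he : Real.tanh = fun x => Real.sinh x / Real.cosh x :=
    funext fun x => Real.tanh_eq_sinh_div_cosh x
  rw [he]
  refine h.congr_deriv ?_
  symm
  beta_reduce
  field_simp

lemma tanh_strictMono : StrictMono Real.tanh :=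
  strictMono_of_deriv_pos fun y => by
    rw [(hasDerivAt_tanh' y).deriv]; linarith [_root_.tanh_sq_lt_one y]

lemma tanh_lt_one' (y : ℝ) : Real.tanh y < 1 := by nlinarith [_root_.tanh_sq_lt_one y]

lemma hasDerivAt_fCW (J h x : ℝ) :
    HasDerivAt (fCW J h) (J * Real.tanh (J * x + h) - J * x) x := by
  have h1 : HasDerivAt (fun x : ℝ => J * x + h) J x := by
    simpa using ((hasDerivAt_id x).const_mul J).add_const h
  have h2 : HasDerivAt (fun x => Real.cosh (J * x + h)) (Real.sinh (J * x + h) * J) x :=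
    (Real.hasDerivAt_cosh _).comp x h1
  have h3 := h2.log (Real.cosh_pos (J * x + h)).ne'
  have h4 : HasDerivAt (fun x : ℝ => -(J / 2) * x ^ 2) (-(J / 2) * (2 * x)) x := by
    simpa using ((hasDerivAt_pow 2 x).const_mul (-(J / 2)))
  have h5 := h4.add h3
  refine h5.congr_deriv ?_
  symm
  rw [Real.tanh_eq_sinh_div_cosh]
  field_simp
  ring

lemma hasDerivAt_Phi (J y : ℝ) :
    HasDerivAt (PhiCW J) (1 - J * (1 - Real.tanh y ^ 2)) y :=
  (hasDerivAt_id y).sub ((hasDerivAt_tanh' y).const_mul J)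

lemma hasDerivAt_F (J y : ℝ) :
    HasDerivAt (FCW J) (Real.tanh y * (1 - J * (1 - Real.tanh y ^ 2))) y := by
  have h1 := ((hasDerivAt_tanh' y).pow 2).const_mul (-(J / 2))
  have h2 := (Real.hasDerivAt_cosh y).log (Real.cosh_pos y).ne'
  have h3 := h1.add h2
  refine h3.congr_deriv ?_
  symm
  rw [← Real.tanh_eq_sinh_div_cosh]
  push_cast
  ring

lemma continuous_tanh' : Continuous Real.tanh :=
  continuous_iff_continuousAt.2 fun y => (hasDerivAt_tanh' y).continuousAt

lemma continuous_PhiCW (J : ℝ) : Continuous (PhiCW J) :=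
  continuous_id.sub (continuous_const.mul continuous_tanh')

lemma continuous_FCW (J : ℝ) : Continuous (FCW J) :=
  (continuous_const.mul (continuous_tanh'.pow 2)).add
    (Real.continuous_cosh.log fun y => (Real.cosh_pos y).ne')

lemma continuous_fCW (J h : ℝ) : Continuous (fCW J h) := by
  refine (continuous_const.mul (continuous_pow 2)).add ?_
  exact (Real.continuous_cosh.comp (by continuity)).log
    fun x => (Real.cosh_pos (J * x + h)).ne'

lemma F_even (J y : ℝ) : FCW J (-y) = FCW J y := by
  unfold FCW; rw [Real.tanh_neg, Real.cosh_neg]; ring_nf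

lemma Phi_odd (J y : ℝ) : PhiCW J (-y) = -PhiCW J y := by
  unfold PhiCW; rw [Real.tanh_neg]; ring

lemma log_cosh_le_abs (t : ℝ) : Real.log (Real.cosh t) ≤ |t| := by
  have h1 : Real.cosh t ≤ Real.exp |t| := by
    rw [Real.cosh_eq]
    have h2 : Real.exp t ≤ Real.exp |t| := Real.exp_le_exp.2 (le_abs_self t)
    have h3 : Real.exp (-t) ≤ Real.exp |t| := Real.exp_le_exp.2 (neg_le_abs t)
    linarith
  calc Real.log (Real.cosh t) ≤ Real.log (Real.exp |t|) :=
        Real.log_le_log (Real.cosh_pos t) h1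
    _ = |t| := Real.log_exp _

lemma log_cosh_le_sq (t : ℝ) : Real.log (Real.cosh t) ≤ t ^ 2 / 2 := by
  calc Real.log (Real.cosh t) ≤ Real.log (Real.exp (t ^ 2 / 2)) :=
        Real.log_le_log (Real.cosh_pos t) (Real.cosh_le_exp_half_sq t)
    _ = t ^ 2 / 2 := Real.log_exp _


lemma fCW_zero_nonneg (J h : ℝ) : 0 ≤ fCW J h 0 := by
  unfold fCW
  simp only [mul_zero, add_zero, zero_add, ne_eq, OfNat.ofNat_ne_zero,
    not_false_eq_true, zero_pow, zero_add]
  have := Real.log_nonneg (Real.one_le_cosh h)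
  nlinarith

lemma fCW_exists_max (J h : ℝ) (hJ : 0 < J) : ∃ m, ∀ x, fCW J h x ≤ fCW J h m := by
  set R : ℝ := 4 + 4 * |h| / J with hR
  have habs : 0 ≤ |h| := abs_nonneg h
  have hR4 : 4 ≤ R := by
    have : 0 ≤ 4 * |h| / J := by positivity
    rw [hR]; linarith
  obtain ⟨m, hmem, hm⟩ := (isCompact_Icc (a := -R) (b := R)).exists_isMaxOn
    ⟨0, by constructor <;> linarith⟩ (continuous_fCW J h).continuousOn
  rw [isMaxOn_iff] at hm
  refine ⟨m, fun x => ?_⟩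
  rcases le_or_gt |x| R with hx | hx
  · exact hm x (abs_le.1 hx)
  · have hb : fCW J h x ≤ -(J / 2) * x ^ 2 + (J * |x| + |h|) := by
      unfold fCW
      have h1 := log_cosh_le_abs (J * x + h)
      have h2 : |J * x + h| ≤ J * |x| + |h| :=
        (abs_add_le _ _).trans (by rw [abs_mul, abs_of_pos hJ])
      linarith
    have hneg : -(J / 2) * x ^ 2 + (J * |x| + |h|) < 0 := by
      have hxx : |x| ^ 2 = x ^ 2 := sq_abs x
      have h1 : J * |x| > J * R := mul_lt_mul_of_pos_left hx hJ
      have h2 : J * R = 4 * J + 4 * |h| := by rw [hR]; field_simp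
      nlinarith [mul_le_mul_of_nonneg_left (hR4.trans hx.le) hJ.le,
        mul_lt_mul_of_pos_left hx hJ, sq_nonneg (|x| - 4)]
    have h0 : fCW J h x < fCW J h 0 := by linarith [fCW_zero_nonneg J h]
    exact (h0.trans_le (hm 0 ⟨by linarith, by linarith⟩)).le

lemma max_crit {J h m : ℝ} (hJ : 0 < J) (hm : ∀ x, fCW J h x ≤ fCW J h m) :
    Real.tanh (J * m + h) = m := by
  have hloc : IsLocalMax (fCW J h) m := Filter.Eventually.of_forall hm
  have hd := hloc.hasDerivAt_eq_zero (hasDerivAt_fCW J h m)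
  have h1 : J * (Real.tanh (J * m + h) - m) = 0 := by linarith [hd]
  rcases mul_eq_zero.1 h1 with h2 | h2
  · exact absurd h2 hJ.ne'
  · linarith

lemma crit_f_eq {J h m : ℝ} (hc : Real.tanh (J * m + h) = m) :
    fCW J h m = FCW J (J * m + h) := by
  unfold fCW FCW; rw [hc]

lemma crit_Phi {J h m : ℝ} (hc : Real.tanh (J * m + h) = m) :
    PhiCW J (J * m + h) = h := by
  unfold PhiCW; rw [hc]; ring

section Jgt1
variable {J : ℝ}

lemma cosh_sCW_sq (hJ1 : 1 < J) : Real.cosh (sCW J) ^ 2 = J := by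
  unfold sCW
  rw [Real.cosh_arsinh]
  rw [Real.sq_sqrt (by nlinarith [Real.sq_sqrt (by linarith : (0:ℝ) ≤ J - 1), Real.sqrt_nonneg (J-1)] : (0:ℝ) ≤ 1 + Real.sqrt (J-1) ^ 2)]
  rw [Real.sq_sqrt (by linarith : (0:ℝ) ≤ J - 1)]
  ring

lemma sCW_pos (hJ1 : 1 < J) : 0 < sCW J := by
  unfold sCW
  rw [Real.arsinh_pos_iff]
  exact Real.sqrt_pos.2 (by linarith)

lemma Phi'_neg (hJ1 : 1 < J) {y : ℝ} (hy : |y| < sCW J) : 1 - J * (1 - Real.tanh y ^ 2) < 0 := by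
  have h1 : Real.cosh y < Real.cosh (sCW J) := by
    rw [Real.cosh_lt_cosh]
    rwa [abs_of_pos (sCW_pos hJ1)]
  have hc := Real.cosh_pos y
  have hcs := Real.cosh_pos (sCW J)
  have h2 : Real.cosh y ^ 2 < J := by nlinarith [cosh_sCW_sq hJ1]
  rw [one_sub_tanh_sq]
  have hc2 : 0 < Real.cosh y ^ 2 := by positivity
  have h3 : (1:ℝ) < J * (1 / Real.cosh y ^ 2) := by
    rw [mul_one_div, lt_div_iff₀ hc2]; linarith
  linarith

lemma Phi'_pos (hJ1 : 1 < J) {y : ℝ} (hy : sCW J < |y|) : 0 < 1 - J * (1 - Real.tanh y ^ 2) := by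
  have h1 : Real.cosh (sCW J) < Real.cosh y := by
    rw [Real.cosh_lt_cosh]
    rwa [abs_of_pos (sCW_pos hJ1)]
  have hc := Real.cosh_pos y
  have hcs := Real.cosh_pos (sCW J)
  have h2 : J < Real.cosh y ^ 2 := by nlinarith [cosh_sCW_sq hJ1]
  rw [one_sub_tanh_sq]
  have hc2 : 0 < Real.cosh y ^ 2 := by positivity
  have h3 : J * (1 / Real.cosh y ^ 2) < 1 := by
    rw [mul_one_div, div_lt_one hc2]; linarith
  linarith


lemma PhiAnti (hJ1 : 1 < J) : StrictAntiOn (PhiCW J) (Icc (-(sCW J)) (sCW J)) := by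
  apply strictAntiOn_of_deriv_neg (convex_Icc _ _) (continuous_PhiCW J).continuousOn
  intro y hy
  rw [interior_Icc, mem_Ioo] at hy
  rw [(hasDerivAt_Phi J y).deriv]
  exact Phi'_neg hJ1 (abs_lt.2 ⟨hy.1, hy.2⟩)

lemma FMono (hJ1 : 1 < J) : StrictMonoOn (FCW J) (Ici (sCW J)) := by
  apply strictMonoOn_of_deriv_pos (convex_Ici _) (continuous_FCW J).continuousOn
  intro y hy
  rw [interior_Ici, mem_Ioi] at hy
  rw [(hasDerivAt_F J y).deriv]
  have hsp := sCW_pos hJ1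
  have hE : 0 < 1 - J * (1 - Real.tanh y ^ 2) :=
    Phi'_pos hJ1 (by rw [abs_of_pos (hsp.trans hy)]; exact hy)
  have ht : 0 < Real.tanh y := by
    have := tanh_strictMono (hsp.trans hy)
    rwa [Real.tanh_zero] at this
  exact mul_pos ht hE

lemma hasDerivAt_G (J c y : ℝ) :
    HasDerivAt (fun y => FCW J y - c * PhiCW J y)
      ((Real.tanh y - c) * (1 - J * (1 - Real.tanh y ^ 2))) y := by
  have := (hasDerivAt_F J y).sub ((hasDerivAt_Phi J y).const_mul c)
  refine this.congr_deriv ?_; ring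

lemma continuous_G (J c : ℝ) : Continuous fun y => FCW J y - c * PhiCW J y :=
  (continuous_FCW J).sub (continuous_const.mul (continuous_PhiCW J))

lemma GMono (hJ1 : 1 < J) :
    StrictMonoOn (fun y => FCW J y - Real.tanh (sCW J) * PhiCW J y) (Ici (-(sCW J))) := by
  set s := sCW J with hs
  have hsp := sCW_pos hJ1
  have h1 : StrictMonoOn (fun y => FCW J y - Real.tanh s * PhiCW J y) (Icc (-s) s) := by
    apply strictMonoOn_of_deriv_pos (convex_Icc _ _) (continuous_G J _).continuousOn
    intro y hy
    rw [interior_Icc, mem_Ioo] at hy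
    rw [(hasDerivAt_G J _ y).deriv]
    have hE : 1 - J * (1 - Real.tanh y ^ 2) < 0 := Phi'_neg hJ1 (abs_lt.2 ⟨hy.1, hy.2⟩)
    have ht : Real.tanh y - Real.tanh s < 0 := sub_neg.2 (tanh_strictMono hy.2)
    exact mul_pos_of_neg_of_neg ht hE
  have h2 : StrictMonoOn (fun y => FCW J y - Real.tanh s * PhiCW J y) (Ici s) := by
    apply strictMonoOn_of_deriv_pos (convex_Ici _) (continuous_G J _).continuousOn
    intro y hy
    rw [interior_Ici, mem_Ioi] at hy
    rw [(hasDerivAt_G J _ y).deriv]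
    have hE : 0 < 1 - J * (1 - Real.tanh y ^ 2) :=
      Phi'_pos hJ1 (by rw [abs_of_pos (hsp.trans hy)]; exact hy)
    have ht : 0 < Real.tanh y - Real.tanh s := sub_pos.2 (tanh_strictMono hy)
    exact mul_pos ht hE
  have h3 := h1.union h2 ⟨⟨by linarith, le_refl s⟩, fun x hx => hx.2⟩ isLeast_Ici
  rwa [Icc_union_Ici_eq_Ici (by linarith : -s ≤ s)] at h3

lemma HAnti (hJ1 : 1 < J) :
    StrictAntiOn (fun y => FCW J y - Real.tanh (-(sCW J)) * PhiCW J y) (Iic (sCW J)) := by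
  set s := sCW J with hs
  have hsp := sCW_pos hJ1
  have h1 : StrictAntiOn (fun y => FCW J y - Real.tanh (-s) * PhiCW J y) (Iic (-s)) := by
    apply strictAntiOn_of_deriv_neg (convex_Iic _) (continuous_G J _).continuousOn
    intro y hy
    rw [interior_Iic, mem_Iio] at hy
    rw [(hasDerivAt_G J _ y).deriv]
    have hE : 0 < 1 - J * (1 - Real.tanh y ^ 2) :=
      Phi'_pos hJ1 (by rw [abs_of_neg (by linarith : y < 0)]; linarith)
    have ht : Real.tanh y - Real.tanh (-s) < 0 := sub_neg.2 (tanh_strictMono hy)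
    exact mul_neg_of_neg_of_pos ht hE
  have h2 : StrictAntiOn (fun y => FCW J y - Real.tanh (-s) * PhiCW J y) (Icc (-s) s) := by
    apply strictAntiOn_of_deriv_neg (convex_Icc _ _) (continuous_G J _).continuousOn
    intro y hy
    rw [interior_Icc, mem_Ioo] at hy
    rw [(hasDerivAt_G J _ y).deriv]
    have hE : 1 - J * (1 - Real.tanh y ^ 2) < 0 := Phi'_neg hJ1 (abs_lt.2 ⟨hy.1, hy.2⟩)
    have ht : 0 < Real.tanh y - Real.tanh (-s) := sub_pos.2 (tanh_strictMono hy.1)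
    exact mul_neg_of_pos_of_neg ht hE
  have h3 := h1.union h2 isGreatest_Iic ⟨⟨le_refl (-s), by linarith⟩, fun x hx => hx.1⟩
  rwa [Iic_union_Icc_eq_Iic (by linarith : -s ≤ s)] at h3

lemma keyCW (hJ1 : 1 < J) {y₁ y₂ : ℝ} (hy : y₁ < y₂)
    (hPhi : PhiCW J y₁ = PhiCW J y₂) (hF : FCW J y₁ = FCW J y₂) : y₂ = -y₁ := by
  set s := sCW J with hs
  have hsp := sCW_pos hJ1
  rcases lt_or_ge y₁ (-s) with h1 | h1
  · rcases lt_or_ge s y₂ with h2 | h2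
    · have hFe : FCW J (-y₁) = FCW J y₂ := by rw [F_even]; exact hF
      have := (FMono hJ1).injOn (by simp only [mem_Ici]; linarith) (mem_Ici.2 h2.le) hFe
      linarith
    · have := HAnti hJ1 (mem_Iic.2 (by linarith : y₁ ≤ s)) (mem_Iic.2 h2) hy
      simp only [] at this
      rw [hPhi] at this
      linarith
  · have := GMono hJ1 (mem_Ici.2 h1) (mem_Ici.2 (by linarith : -s ≤ y₂)) hy
    simp only [] at this
    rw [hPhi] at this
    linarith

end Jgt1

lemma PhiMono {J : ℝ} (hJ : 0 < J) (hJ1 : J ≤ 1) : StrictMono (PhiCW J) := by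
  have hpos : ∀ y : ℝ, y ≠ 0 → 0 < 1 - J * (1 - Real.tanh y ^ 2) := by
    intro y hy
    rw [one_sub_tanh_sq]
    have hc : 1 < Real.cosh y := Real.one_lt_cosh.2 hy
    have hc2 : (1:ℝ) < Real.cosh y ^ 2 := by nlinarith
    have : J * (1 / Real.cosh y ^ 2) < 1 := by
      rw [mul_one_div, div_lt_one (by positivity)]; linarith
    linarith
  have h1 : StrictMonoOn (PhiCW J) (Iic 0) := by
    apply strictMonoOn_of_deriv_pos (convex_Iic _) (continuous_PhiCW J).continuousOn
    intro y hy
    rw [interior_Iic, mem_Iio] at hy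
    rw [(hasDerivAt_Phi J y).deriv]
    exact hpos y hy.ne
  have h2 : StrictMonoOn (PhiCW J) (Ici 0) := by
    apply strictMonoOn_of_deriv_pos (convex_Ici _) (continuous_PhiCW J).continuousOn
    intro y hy
    rw [interior_Ici, mem_Ioi] at hy
    rw [(hasDerivAt_Phi J y).deriv]
    exact hpos y hy.ne'
  exact h1.Iic_union_Ici h2

lemma PhiCW_zero (J : ℝ) : PhiCW J 0 = 0 := by
  unfold PhiCW; rw [Real.tanh_zero]; ring

lemma exists_y0 {J : ℝ} (hJ1 : 1 < J) : ∃ y₀, sCW J < y₀ ∧ PhiCW J y₀ = 0 := by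
  set s := sCW J with hs
  have hsp := sCW_pos hJ1
  have hPs : PhiCW J s < 0 := by
    have := PhiAnti hJ1 (mem_Icc.2 ⟨by linarith, by linarith⟩)
      (mem_Icc.2 ⟨by linarith, le_refl s⟩) hsp
    rwa [PhiCW_zero] at this
  set T : ℝ := s + J + 1 with hT
  have hPT : 0 < PhiCW J T := by
    have h1 : Real.tanh T < 1 := tanh_lt_one' T
    have : PhiCW J T = T - J * Real.tanh T := rfl
    nlinarith
  have hcont : ContinuousOn (PhiCW J) (Icc s T) := (continuous_PhiCW J).continuousOn
  have hsub := intermediate_value_Ioo (by nlinarith : s ≤ T) hcont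
  have h0 : (0:ℝ) ∈ Ioo (PhiCW J s) (PhiCW J T) := ⟨hPs, hPT⟩
  obtain ⟨y₀, hy₀, hval⟩ := hsub h0
  exact ⟨y₀, hy₀.1, hval⟩

lemma max_eq_of_le_one {J h m m' : ℝ} (hJ : 0 < J) (hJ1 : J ≤ 1)
    (hm : ∀ x, fCW J h x ≤ fCW J h m) (hm' : ∀ x, fCW J h x ≤ fCW J h m') : m = m' := by
  have hc := max_crit hJ hm
  have hc' := max_crit hJ hm'
  have h1 : J * m + h = J * m' + h :=
    (PhiMono hJ hJ1).injective (by rw [crit_Phi hc, crit_Phi hc'])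
  exact mul_left_cancel₀ hJ.ne' (by linarith)

lemma maxCases {J h m m' : ℝ} (hJ : 0 < J) (hJ1 : 1 < J)
    (hm : ∀ x, fCW J h x ≤ fCW J h m) (hm' : ∀ x, fCW J h x ≤ fCW J h m')
    (hne : m ≠ m') : h = 0 ∧ m' = -m := by
  have hc := max_crit hJ hm
  have hc' := max_crit hJ hm'
  have hPhi : PhiCW J (J * m + h) = PhiCW J (J * m' + h) := by
    rw [crit_Phi hc, crit_Phi hc']
  have hF : FCW J (J * m + h) = FCW J (J * m' + h) := by
    rw [← crit_f_eq hc, ← crit_f_eq hc']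
    exact le_antisymm (hm' m) (hm m')
  have hyne : J * m + h ≠ J * m' + h := fun e => hne (mul_left_cancel₀ hJ.ne' (by linarith))
  have hkey : J * m' + h = -(J * m + h) := by
    rcases hyne.lt_or_gt with hlt | hlt
    · exact keyCW hJ1 hlt hPhi hF
    · have := keyCW hJ1 hlt hPhi.symm hF.symm
      linarith
  have h2 : h = -h := by
    have h3 := crit_Phi hc'
    rw [hkey, Phi_odd, crit_Phi hc] at h3
    linarith
  have h0 : h = 0 := by linarith
  subst h0
  refine ⟨rfl, ?_⟩
  have h4 : J * m' = J * (-m) := by linarith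
  exact mul_left_cancel₀ hJ.ne' h4

lemma fCW_even (J x : ℝ) : fCW J 0 (-x) = fCW J 0 x := by
  unfold fCW
  have he : J * -x + 0 = -(J * x + 0) := by ring
  rw [he, Real.cosh_neg]
  ring

lemma zero_not_max {J : ℝ} (hJ : 0 < J) (hJ1 : 1 < J) : ∃ x, fCW J 0 0 < fCW J 0 x := by
  obtain ⟨y₀, hy₀s, hy₀⟩ := exists_y0 hJ1
  have hsp := sCW_pos hJ1
  have hcrit : J * Real.tanh y₀ + 0 = y₀ := by
    have h5 : y₀ - J * Real.tanh y₀ = 0 := hy₀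
    linarith
  have h1 : fCW J 0 (Real.tanh y₀) = FCW J y₀ := by
    have h6 := crit_f_eq (J := J) (h := 0) (m := Real.tanh y₀) (by rw [hcrit])
    rw [h6, hcrit]
  have h2 : FCW J 0 < FCW J y₀ := by
    have hg := GMono hJ1 (mem_Ici.2 (by linarith : -(sCW J) ≤ 0))
      (mem_Ici.2 (by linarith : -(sCW J) ≤ y₀)) (by linarith : (0:ℝ) < y₀)
    simp only [] at hg
    rw [hy₀, PhiCW_zero] at hg
    linarith
  have h3 : fCW J 0 0 = FCW J 0 := by
    unfold fCW FCW
    norm_num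
  exact ⟨Real.tanh y₀, by rw [h3, h1]; exact h2⟩

theorem stmt_7 (J h : ℝ) (hJ : 0 < J) (f : ℝ → ℝ)
    (hf : ∀ x, f x = -(J / 2) * x ^ 2 + Real.log (Real.cosh (J * x + h))) :
    (h ≠ 0 → ∃! μ : ℝ, ∀ x, f x ≤ f μ) ∧
    (h = 0 → J ≤ 1 → (∀ x, f x ≤ f 0) ∧ ∀ μ : ℝ, (∀ x, f x ≤ f μ) → μ = 0) ∧
    (h = 0 → 1 < J → ∃ μ₀ : ℝ, 0 < μ₀ ∧ μ₀ = Real.tanh (J * μ₀) ∧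
      {μ : ℝ | ∀ x, f x ≤ f μ} = {μ₀, -μ₀}) := by
  have hfe : f = fCW J h := by funext x; exact hf x
  subst hfe
  refine ⟨?_, ?_, ?_⟩
  · intro hne
    obtain ⟨m, hm⟩ := fCW_exists_max J h hJ
    refine ⟨m, hm, fun m' hm' => ?_⟩
    by_contra hne'
    rcases le_or_gt J 1 with hJ1 | hJ1
    · exact hne' (max_eq_of_le_one hJ hJ1 hm' hm)
    · exact hne ((maxCases hJ hJ1 hm hm' (fun e => hne' e.symm)).1)
  · intro h0 hJ1
    subst h0
    have hub : ∀ x, fCW J 0 x ≤ fCW J 0 0 := by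
      intro x
      have h1 := log_cosh_le_sq (J * x + 0)
      have h2 : fCW J 0 0 = 0 := by unfold fCW; norm_num
      rw [h2]
      unfold fCW
      nlinarith [sq_nonneg x]
    exact ⟨hub, fun μ hμ => max_eq_of_le_one hJ hJ1 hμ hub⟩
  · intro h0 hJ1
    subst h0
    obtain ⟨m, hm⟩ := fCW_exists_max J 0 hJ
    have hmne : m ≠ 0 := by
      intro he; subst he
      obtain ⟨x, hx⟩ := zero_not_max hJ hJ1
      exact absurd (hm x) (not_le.2 hx)
    obtain ⟨μ₀, hpos, hμmax⟩ : ∃ μ₀, 0 < μ₀ ∧ ∀ x, fCW J 0 x ≤ fCW J 0 μ₀ := by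
      rcases hmne.lt_or_gt with hlt | hlt
      · exact ⟨-m, by linarith, fun x => (hm x).trans_eq (fCW_even J m).symm⟩
      · exact ⟨m, hlt, hm⟩
    refine ⟨μ₀, hpos, ?_, ?_⟩
    · have h3 := max_crit hJ hμmax
      rw [add_zero] at h3
      exact h3.symm
    · ext ν
      simp only [mem_setOf_eq, mem_insert_iff, mem_singleton_iff]
      constructor
      · intro hν
        by_cases hcase : ν = μ₀
        · exact Or.inl hcase
        · exact Or.inr ((maxCases hJ hJ1 hμmax hν (fun e => hcase e.symm)).2)
      · rintro (rfl | rfl)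
        · exact hμmax
        · exact fun x => (hμmax x).trans_eq (fCW_even J μ₀).symm
end

section
/- Let f : ℝⁿ → ℝ be continuous with ∫_{ℝⁿ} exp(f(x)) dx < ∞ and maximum F = f(μ) attained at μ. Then ∫ exp(N f(x)) dx < ∞ for every N ≥ 1, and (1/N) log ∫_{ℝⁿ} exp(N f(x)) dx → f(μ) as N → ∞. -/
open MeasureTheory Real Filter

theorem stmt_16 (n : ℕ) (f : (Fin n → ℝ) → ℝ) (hc : Continuous f)
    (hint : Integrable (fun x => Real.exp (f x)) volume)
    (μ : Fin n → ℝ) (hmax : ∀ x, f x ≤ f μ) :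
    (∀ N : ℕ, 1 ≤ N → Integrable (fun x => Real.exp (N * f x)) volume) ∧
    Tendsto (fun N : ℕ => (1 / (N : ℝ)) * Real.log (∫ x, Real.exp (N * f x)))
      atTop (nhds (f μ)) := by
  set F := f μ with hF
  have key : ∀ (N : ℕ), 1 ≤ N → ∀ x, (N : ℝ) * f x ≤ ((N : ℝ) - 1) * F + f x := by
    intro N hN x
    have h1 : (1 : ℝ) ≤ N := by exact_mod_cast hN
    nlinarith [hmax x]
  have hint' : ∀ N : ℕ, 1 ≤ N → Integrable (fun x => Real.exp (N * f x)) volume := by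
    intro N hN
    apply Integrable.mono' (hint.const_mul (Real.exp (((N : ℝ) - 1) * F)))
    · exact (Continuous.rexp (continuous_const.mul hc)).aestronglyMeasurable
    · filter_upwards with x
      simp only [Real.norm_eq_abs, abs_of_pos (Real.exp_pos _), ← Real.exp_add]
      exact Real.exp_le_exp.mpr (key N hN x)
  refine ⟨hint', ?_⟩
  have hI1pos : 0 < ∫ x, Real.exp (f x) := integral_exp_pos hint
  have hpos : ∀ N : ℕ, 1 ≤ N → 0 < ∫ x, Real.exp (N * f x) := fun N hN =>
    integral_exp_pos (hint' N hN)
  -- upper bound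
  have hub : ∀ N : ℕ, 1 ≤ N →
      Real.log (∫ x, Real.exp (N * f x)) ≤ ((N : ℝ) - 1) * F + Real.log (∫ x, Real.exp (f x)) := by
    intro N hN
    have h1 : (∫ x, Real.exp (N * f x)) ≤ Real.exp (((N : ℝ) - 1) * F) * ∫ x, Real.exp (f x) := by
      rw [← integral_const_mul]
      apply integral_mono (hint' N hN) (hint.const_mul _)
      intro x
      simp only [← Real.exp_add]
      exact Real.exp_le_exp.mpr (key N hN x)
    calc Real.log (∫ x, Real.exp (N * f x))
        ≤ Real.log (Real.exp (((N : ℝ) - 1) * F) * ∫ x, Real.exp (f x)) :=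
          Real.log_le_log (hpos N hN) h1
      _ = ((N : ℝ) - 1) * F + Real.log (∫ x, Real.exp (f x)) := by
          rw [Real.log_mul (Real.exp_ne_zero _) (ne_of_gt hI1pos), Real.log_exp]
  rw [tendsto_order]
  constructor
  · -- lower bound part
    intro a ha
    set ε := (F - a) / 2 with hε
    have hεpos : 0 < ε := by simp [hε]; linarith
    obtain ⟨δ, hδpos, hδ⟩ := Metric.continuousAt_iff.mp hc.continuousAt ε hεpos
    set V := (volume (Metric.ball μ δ)).toReal with hV
    have hVpos : 0 < V := by
      apply ENNReal.toReal_pos (ne_of_gt (Metric.measure_ball_pos volume μ hδpos))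
      exact (measure_ball_lt_top).ne
    have hlb : ∀ N : ℕ, 1 ≤ N →
        Real.log V + (N : ℝ) * (F - ε) ≤ Real.log (∫ x, Real.exp (N * f x)) := by
      intro N hN
      have h1 : V * Real.exp ((N : ℝ) * (F - ε)) ≤ ∫ x, Real.exp (N * f x) := by
        have h2 : ∫ x in Metric.ball μ δ, Real.exp ((N : ℝ) * (F - ε)) ≤
            ∫ x in Metric.ball μ δ, Real.exp (N * f x) := by
          apply setIntegral_mono_on (integrableOn_const measure_ball_lt_top.ne enorm_ne_top)
            ((hint' N hN).integrableOn) Metric.isOpen_ball.measurableSet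
          intro x hx
          apply Real.exp_le_exp.mpr
          apply mul_le_mul_of_nonneg_left _ (Nat.cast_nonneg N)
          have := hδ (Metric.mem_ball.mp hx)
          rw [Real.dist_eq] at this
          have := abs_lt.mp this
          linarith [this.1]
        have h3 : ∫ x in Metric.ball μ δ, Real.exp (N * f x) ≤ ∫ x, Real.exp (N * f x) :=
          setIntegral_le_integral (hint' N hN)
            (Filter.Eventually.of_forall fun x => (Real.exp_pos _).le)
        calc V * Real.exp ((N : ℝ) * (F - ε))
            = ∫ x in Metric.ball μ δ, Real.exp ((N : ℝ) * (F - ε)) := by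
              rw [setIntegral_const, smul_eq_mul]; rfl
          _ ≤ _ := h2.trans h3
      calc Real.log V + (N : ℝ) * (F - ε)
          = Real.log (V * Real.exp ((N : ℝ) * (F - ε))) := by
            rw [Real.log_mul (ne_of_gt hVpos) (Real.exp_ne_zero _), Real.log_exp]
        _ ≤ _ := Real.log_le_log (by positivity) h1
    have hlim : Tendsto (fun N : ℕ => Real.log V / (N : ℝ) + (F - ε)) atTop (nhds (F - ε)) := by
      have := (tendsto_const_div_atTop_nhds_zero_nat (Real.log V)).add_const (F - ε)
      simpa using this
    have hev : ∀ᶠ N : ℕ in atTop, a < Real.log V / (N : ℝ) + (F - ε) :=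
      hlim.eventually (eventually_gt_nhds (by simp [hε]; linarith))
    filter_upwards [hev, Filter.eventually_ge_atTop 1] with N h1 h2
    have hN0 : (0 : ℝ) < N := by exact_mod_cast h2
    calc a < Real.log V / (N : ℝ) + (F - ε) := h1
      _ = (1 / (N : ℝ)) * (Real.log V + (N : ℝ) * (F - ε)) := by field_simp
      _ ≤ (1 / (N : ℝ)) * Real.log (∫ x, Real.exp (N * f x)) :=
          mul_le_mul_of_nonneg_left (hlb N h2) (by positivity)
  · intro a ha
    set C := Real.log (∫ x, Real.exp (f x)) with hC
    have hlim : Tendsto (fun N : ℕ => F + (C - F) / (N : ℝ)) atTop (nhds F) := by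
      have := (tendsto_const_div_atTop_nhds_zero_nat (C - F)).const_add F
      simpa using this
    have hev : ∀ᶠ N : ℕ in atTop, F + (C - F) / (N : ℝ) < a :=
      hlim.eventually (eventually_lt_nhds ha)
    filter_upwards [hev, Filter.eventually_ge_atTop 1] with N h1 h2
    have hN0 : (0 : ℝ) < N := by exact_mod_cast h2
    calc (1 / (N : ℝ)) * Real.log (∫ x, Real.exp (N * f x))
        ≤ (1 / (N : ℝ)) * (((N : ℝ) - 1) * F + C) :=
          mul_le_mul_of_nonneg_left (hub N h2) (by positivity)
      _ = F + (C - F) / (N : ℝ) := by field_simp; ring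
      _ < a := h1
end
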